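/- Perron–Frobenius under discrete Doeblin minorization (existence): Let n be a nonempty finite index type and A an n×n real matrix with nonnegative entries. Suppose there exist α > 0 and vectors u, g : n → ℝ with u i > 0 and g j > 0 for all i, j, such that A i j ≥ α · u i · g j for all i, j. Then there exist a real number r > 0 and a vector w : n → ℝ with w i > 0 for all i such that A *ᵥ w = r • w, and every eigenvalue μ ∈ ℂ of A (i.e. every element of the spectrum of the complexified matrix Aℂ) satisfies ‖μ‖ ≤ r; that is, r is the spectral radius of A and is a positive eigenvalue with a strictly positive eigenvector. -/

import Mathlib

open scoped Matrix

section PFaux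

variable {n : Type*} [Fintype n] [DecidableEq n] [Nonempty n]

omit [DecidableEq n] [Nonempty n] in
private lemma pf_mulVec_pos (A : Matrix n n ℝ) (hApos : ∀ i j, 0 < A i j)
    (x : n → ℝ) (hx0 : ∀ j, 0 ≤ x j) (hxne : ∃ j, 0 < x j) :
    ∀ i, 0 < (A *ᵥ x) i := by
  intro i
  obtain ⟨j0, hj0⟩ := hxne
  refine Finset.sum_pos' (fun j _ => mul_nonneg (hApos i j).le (hx0 j)) ⟨j0, Finset.mem_univ _, ?_⟩
  exact mul_pos (hApos i j0) hj0

end PFaux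

/-- Perron–Frobenius under discrete Doeblin minorization (existence): if `A`
is a nonnegative matrix with `A i j ≥ α · u i · g j` for some `α > 0` and
strictly positive vectors `u, g`, then there exist `r > 0` and a strictly
positive vector `w` with `A *ᵥ w = r • w`, and every eigenvalue `μ` of the
complexified matrix satisfies `‖μ‖ ≤ r`. -/
theorem perron_frobenius_doeblin_existence
    {n : Type*} [Fintype n] [DecidableEq n] [Nonempty n]
    (A : Matrix n n ℝ) (hA : ∀ i j, 0 ≤ A i j)
    (α : ℝ) (hα : 0 < α) (u g : n → ℝ)
    (hu : ∀ i, 0 < u i) (hg : ∀ j, 0 < g j)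
    (hmin : ∀ i j, α * u i * g j ≤ A i j) :
    ∃ r : ℝ, 0 < r ∧ ∃ w : n → ℝ, (∀ i, 0 < w i) ∧
      A *ᵥ w = r • w ∧
      ∀ μ ∈ spectrum ℂ (A.map (Complex.ofReal ·)), ‖μ‖ ≤ r := by
  classical
  have hApos : ∀ i j, 0 < A i j := fun i j =>
    lt_of_lt_of_le (mul_pos (mul_pos hα (hu i)) (hg j)) (hmin i j)
  -- the simplex
  set S : Set (n → ℝ) := stdSimplex ℝ n with hS
  have hSne : S.Nonempty := ⟨Pi.single (Classical.arbitrary n) 1, single_mem_stdSimplex ℝ _⟩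
  have hScompact : IsCompact S := isCompact_stdSimplex ℝ n
  -- positivity of A *ᵥ x on S
  have hposS : ∀ x ∈ S, ∀ i, 0 < (A *ᵥ x) i := by
    intro x hx i
    refine pf_mulVec_pos A hApos x hx.1 ?_ i
    by_contra h
    push_neg at h
    have hz : ∀ j, x j = 0 := fun j => le_antisymm (h j) (hx.1 j)
    have h2 := hx.2
    rw [Finset.sum_congr rfl (fun j _ => hz j)] at h2
    simp at h2
  -- total mass of A *ᵥ x
  set s : (n → ℝ) → ℝ := fun x => ∑ i, (A *ᵥ x) i with hs
  have hspos : ∀ x ∈ S, 0 < s x := by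
    intro x hx
    exact Finset.sum_pos (fun i _ => hposS x hx i) Finset.univ_nonempty
  -- the normalized map
  set T : (n → ℝ) → (n → ℝ) := fun x => (s x)⁻¹ • (A *ᵥ x) with hT
  have hTmem : ∀ x ∈ S, T x ∈ S := by
    intro x hx
    constructor
    · intro i
      exact mul_nonneg (inv_nonneg.mpr (hspos x hx).le) (hposS x hx i).le
    · simp only [hT, Pi.smul_apply, smul_eq_mul, ← Finset.mul_sum]
      exact inv_mul_cancel₀ (hspos x hx).ne'
  have hcontmv : Continuous fun x : n → ℝ => A *ᵥ x := by
    unfold Matrix.mulVec dotProduct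
    exact continuous_pi fun i =>
      continuous_finset_sum _ fun j _ => (continuous_const.mul (continuous_apply j))
  have hconts : Continuous s :=
    continuous_finset_sum _ fun i _ => (continuous_apply i).comp hcontmv
  have hTcont : ContinuousOn T S :=
    ContinuousOn.smul ((hconts.continuousOn).inv₀ fun x hx => (hspos x hx).ne')
      hcontmv.continuousOn
  -- the compact set K of normalized images
  set K : Set (n → ℝ) := T '' S with hK
  have hKcompact : IsCompact K := hScompact.image_of_continuousOn hTcont
  have hKne : K.Nonempty := hSne.image T
  have hKsub : K ⊆ S := by rintro _ ⟨x, hx, rfl⟩; exact hTmem x hx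
  have hKpos : ∀ y ∈ K, ∀ i, 0 < y i := by
    rintro _ ⟨x, hx, rfl⟩ i
    exact mul_pos (inv_pos.mpr (hspos x hx)) (hposS x hx i)
  -- the Collatz–Wielandt function
  set f : (n → ℝ) → ℝ := fun x =>
    Finset.univ.inf' Finset.univ_nonempty (fun i => (A *ᵥ x) i / x i) with hf
  have hfcont : ContinuousOn f K := by
    apply ContinuousOn.finset_inf'_apply
    intro i _
    exact ContinuousOn.div ((continuous_apply i).comp hcontmv).continuousOn
      (continuousOn_apply i K) (fun y hy => (hKpos y hy i).ne')
  obtain ⟨w, hwK, hwmax⟩ := hKcompact.exists_isMaxOn hKne hfcont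
  have hwpos : ∀ i, 0 < w i := hKpos w hwK
  set r : ℝ := f w with hr
  have hwmax' : ∀ y ∈ K, f y ≤ r := fun y hy => hwmax hy
  -- r * w ≤ A *ᵥ w
  have hge : ∀ i, r * w i ≤ (A *ᵥ w) i := by
    intro i
    have h1 : r ≤ (A *ᵥ w) i / w i := Finset.inf'_le _ (Finset.mem_univ i)
    exact (le_div_iff₀ (hwpos i)).mp h1
  have hwS : w ∈ S := hKsub hwK
  have hAwpos : ∀ i, 0 < (A *ᵥ w) i := hposS w hwS
  have hrpos : 0 < r := by
    rw [hr, hf]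
    rw [Finset.lt_inf'_iff]
    intro i _
    exact div_pos (hAwpos i) (hwpos i)
  -- equality
  have heq : A *ᵥ w = r • w := by
    by_contra hne
    have hex : ∃ i0, r * w i0 < (A *ᵥ w) i0 := by
      by_contra h
      push_neg at h
      apply hne
      funext i
      simp only [Pi.smul_apply, smul_eq_mul]
      exact le_antisymm (h i) (hge i)
    obtain ⟨i0, hi0⟩ := hex
    set y : n → ℝ := A *ᵥ w with hy
    have hypos : ∀ i, 0 < y i := hAwpos
    -- A y > r y componentwise
    have hstep : ∀ i, r * y i < (A *ᵥ y) i := by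
      intro i
      have h1 : (A *ᵥ y) i - r * y i = ∑ j, A i j * (y j - r * w j) := by
        simp only [hy, Matrix.mulVec, dotProduct, Finset.mul_sum, mul_sub,
          ← Finset.sum_sub_distrib]
        congr 1
        funext j
        ring
      have h2 : 0 < ∑ j, A i j * (y j - r * w j) := by
        refine Finset.sum_pos' (fun j _ => mul_nonneg (hApos i j).le (by linarith [hge j]))
          ⟨i0, Finset.mem_univ _, mul_pos (hApos i i0) (by linarith)⟩
      linarith [h1 ▸ h2]
    -- T w ∈ K and f (T w) > r : contradiction
    have hTwK : T w ∈ K := ⟨w, hwS, rfl⟩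
    have hTw : T w = (s w)⁻¹ • y := rfl
    have hc : 0 < (s w)⁻¹ := inv_pos.mpr (hspos w hwS)
    have hfTw : r < f (T w) := by
      rw [hf, Finset.lt_inf'_iff]
      intro i _
      have hmv : (A *ᵥ T w) i = (s w)⁻¹ * (A *ᵥ y) i := by
        rw [hTw, Matrix.mulVec_smul]
        simp
      have hTwi : T w i = (s w)⁻¹ * y i := rfl
      rw [hmv, hTwi, mul_div_mul_left _ _ hc.ne']
      rw [lt_div_iff₀ (hypos i)]
      linarith [hstep i]
    exact absurd (hwmax' (T w) hTwK) (not_le.mpr hfTw)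
  refine ⟨r, hrpos, w, hwpos, heq, ?_⟩
  -- spectral bound
  intro μ hμ
  rw [← AlgEquiv.spectrum_eq (Matrix.toLinAlgEquiv' (R := ℂ) (n := n)),
    ← Module.End.hasEigenvalue_iff_mem_spectrum] at hμ
  obtain ⟨z, hz⟩ := hμ.exists_hasEigenvector
  have hz0 : z ≠ 0 := hz.right
  have hzeq : (A.map (Complex.ofReal ·)) *ᵥ z = μ • z := by
    have h := hz.apply_eq_smul
    rw [Matrix.toLinAlgEquiv'_apply] at h
    exact h
  -- pick the maximizer of ‖z i‖ / w i
  obtain ⟨i0, -, hi0max⟩ := Finset.exists_max_image Finset.univ (fun i => ‖z i‖ / w i)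
    Finset.univ_nonempty
  set c : ℝ := ‖z i0‖ / w i0 with hcdef
  have hle : ∀ j, ‖z j‖ ≤ c * w j := by
    intro j
    have := hi0max j (Finset.mem_univ j)
    calc ‖z j‖ = ‖z j‖ / w j * w j := (div_mul_cancel₀ _ (hwpos j).ne').symm
    _ ≤ c * w j := by
        apply mul_le_mul_of_nonneg_right this (hwpos j).le
  have hcpos : 0 < c := by
    obtain ⟨j, hzj⟩ : ∃ j, z j ≠ 0 := by
      by_contra h
      push_neg at h
      exact hz0 (funext h)
    have h1 : 0 < ‖z j‖ / w j := div_pos (norm_pos_iff.mpr hzj) (hwpos j)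
    exact lt_of_lt_of_le h1 (hi0max j (Finset.mem_univ j))
  have hzi0 : ‖z i0‖ = c * w i0 := (div_mul_cancel₀ _ (hwpos i0).ne').symm
  have hzi0pos : 0 < ‖z i0‖ := by rw [hzi0]; exact mul_pos hcpos (hwpos i0)
  have key : ‖μ‖ * ‖z i0‖ ≤ r * ‖z i0‖ := by
    have h1 : μ * z i0 = ∑ j, (A i0 j : ℂ) * z j := by
      have := congrFun hzeq i0
      simp only [Pi.smul_apply, smul_eq_mul] at this
      rw [← this]
      rfl
    calc ‖μ‖ * ‖z i0‖ = ‖μ * z i0‖ := (norm_mul _ _).symm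
      _ = ‖∑ j, (A i0 j : ℂ) * z j‖ := by rw [h1]
      _ ≤ ∑ j, ‖(A i0 j : ℂ) * z j‖ := norm_sum_le _ _
      _ = ∑ j, A i0 j * ‖z j‖ := by
          congr 1; funext j
          rw [norm_mul, Complex.norm_real, Real.norm_of_nonneg (hA i0 j)]
      _ ≤ ∑ j, A i0 j * (c * w j) := by
          apply Finset.sum_le_sum
          intro j _
          exact mul_le_mul_of_nonneg_left (hle j) (hA i0 j)
      _ = c * (A *ᵥ w) i0 := by
          simp only [Matrix.mulVec, dotProduct, Finset.mul_sum]
          congr 1; funext j; ring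
      _ = c * (r * w i0) := by rw [heq]; rfl
      _ = r * (c * w i0) := by ring
      _ = r * ‖z i0‖ := by rw [hzi0]
  exact le_of_mul_le_mul_right key hzi0pos
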